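/- Let G = (V, E) be a finite bipartite multigraph. Then the number of distinct degree sequences of spanning subgraphs of G equals T_G(2,1), the Tutte polynomial of G evaluated at (2,1). -/

import Mathlib

set_option linter.unusedSectionVars false
set_option linter.unnecessarySeqFocus false
set_option linter.unusedTactic false
set_option linter.unusedVariables false
set_option maxHeartbeats 1000000



open Finset

variable {V E : Type*}

/-- Number of connected components of the multigraph on vertex set `V`
with edges `A ⊆ E`, where `ends e` gives the (unordered) endpoints of `e`. -/
noncomputable def numComponents (ends : E → Sym2 V) (A : Finset E) : ℕ :=
  Nat.card (SimpleGraph.fromRel fun x y => ∃ e ∈ A, ends e = s(x, y)).ConnectedComponent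

/-- The spanning subgraph `(V, A)` of the multigraph is a forest:
no loops, no parallel edges, and the underlying simple graph is acyclic. -/
def IsForestEdges (ends : E → Sym2 V) (A : Finset E) : Prop :=
  (∀ e ∈ A, ¬ (ends e).IsDiag) ∧ Set.InjOn ends ↑A ∧
    (SimpleGraph.fromRel fun x y => ∃ e ∈ A, ends e = s(x, y)).IsAcyclic

/-- Subset-expansion evaluation of the Tutte polynomial of the multigraph. -/
noncomputable def tutteEval [Fintype V] [Fintype E] [DecidableEq E]
    (ends : E → Sym2 V) (x y : ℤ) : ℤ :=
  ∑ A : Finset E,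
    (x - 1) ^ (numComponents ends A - numComponents ends Finset.univ) *
      (y - 1) ^ (numComponents ends A + A.card - Fintype.card V)

/-- Tail of edge `e` under the orientation `σ` (edges carry a reference
direction `src e → tgt e`; `σ e = true` means the edge is flipped). -/
def otail (src tgt : E → V) (σ : E → Bool) (e : E) : V :=
  if σ e then tgt e else src e

/-- Head of edge `e` under the orientation `σ`. -/
def ohead (src tgt : E → V) (σ : E → Bool) (e : E) : V :=
  if σ e then src e else tgt e

/-- Outdegree of `v` under the orientation `σ`. -/
def outdeg [Fintype E] [DecidableEq V] (src tgt : E → V) (σ : E → Bool) (v : V) : ℕ :=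
  (Finset.univ.filter fun e => otail src tgt σ e = v).card

/-- Indegree of `v` under the orientation `σ`. -/
def indeg [Fintype E] [DecidableEq V] (src tgt : E → V) (σ : E → Bool) (v : V) : ℕ :=
  (Finset.univ.filter fun e => ohead src tgt σ e = v).card

/-- Score of `v` under the orientation `σ`: outdegree minus indegree. -/
def score [Fintype E] [DecidableEq V] (src tgt : E → V) (σ : E → Bool) (v : V) : ℤ :=
  (outdeg src tgt σ v : ℤ) - (indeg src tgt σ v : ℤ)

/-- Score of `v` in the spanning subdigraph of `G_σ` with arc set `F`. -/
def scoreSub [DecidableEq V] (src tgt : E → V) (σ : E → Bool) (F : Finset E) (v : V) : ℤ :=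
  ((F.filter fun e => otail src tgt σ e = v).card : ℤ) -
    ((F.filter fun e => ohead src tgt σ e = v).card : ℤ)

/-- Degree of `v` in the spanning subgraph with edge set `F` (loops count twice). -/
def degIn [DecidableEq V] (src tgt : E → V) (F : Finset E) (v : V) : ℕ :=
  (F.filter fun e => src e = v).card + (F.filter fun e => tgt e = v).card

/-- Directed reachability in the digraph `G_σ`. -/
def dirReach (src tgt : E → V) (σ : E → Bool) : V → V → Prop :=
  Relation.ReflTransGen fun x y => ∃ e, otail src tgt σ e = x ∧ ohead src tgt σ e = y

namespace AuxDS

variable {V E : Type*}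


variable {V : Type*}

lemma reach_of_reach {G G' : SimpleGraph V}
    (h : ∀ x y, G'.Adj x y → G.Reachable x y) {x y : V} (hr : G'.Reachable x y) :
    G.Reachable x y := by
  obtain ⟨p⟩ := hr
  induction p with
  | nil => exact SimpleGraph.Reachable.refl _
  | cons ha _ ih => exact (h _ _ ha).trans ih

lemma card_cc_eq_of_reach {G G' : SimpleGraph V} (hle : G ≤ G')
    (h : ∀ x y, G'.Adj x y → G.Reachable x y) :
    Nat.card G'.ConnectedComponent = Nat.card G.ConnectedComponent := by
  have hbij : Function.Bijective
      (SimpleGraph.ConnectedComponent.map (SimpleGraph.Hom.ofLE hle)) := by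
    constructor
    · refine SimpleGraph.ConnectedComponent.ind₂ (fun x y hxy => ?_)
      simp only [SimpleGraph.ConnectedComponent.map_mk,
        SimpleGraph.ConnectedComponent.eq] at hxy ⊢
      exact reach_of_reach h hxy
    · refine SimpleGraph.ConnectedComponent.ind (fun x => ⟨G.connectedComponentMk x, rfl⟩)
  exact (Nat.card_congr (Equiv.ofBijective _ hbij)).symm

lemma card_cc_bot [Fintype V] :
    Nat.card (⊥ : SimpleGraph V).ConnectedComponent = Fintype.card V := by
  have hbij : Function.Bijective ((⊥ : SimpleGraph V).connectedComponentMk) := by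
    constructor
    · intro x y hxy
      rw [SimpleGraph.ConnectedComponent.eq, SimpleGraph.reachable_bot] at hxy
      exact hxy
    · exact SimpleGraph.ConnectedComponent.ind (fun x => ⟨x, rfl⟩)
  rw [← Nat.card_congr (Equiv.ofBijective _ hbij), Nat.card_eq_fintype_card]

lemma card_cc_merge [Finite V] {G G' : SimpleGraph V} (hle : G ≤ G') {u w : V}
    (hadj : ∀ x y, G'.Adj x y → G.Adj x y ∨ (x = u ∧ y = w) ∨ (x = w ∧ y = u))
    (hadj' : G'.Adj u w)
    (hnr : ¬ G.Reachable u w) :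
    Nat.card G'.ConnectedComponent + 1 = Nat.card G.ConnectedComponent := by
  classical
  set f := SimpleGraph.ConnectedComponent.map (SimpleGraph.Hom.ofLE hle) with hf
  set cu := G.connectedComponentMk u
  set cw := G.connectedComponentMk w
  -- the merge relation
  set r : G.ConnectedComponent → G.ConnectedComponent → Prop :=
    fun c c' => c = c' ∨ (c = cu ∧ c' = cw) ∨ (c = cw ∧ c' = cu) with hr
  have hrstep : ∀ x y, G'.Adj x y → r (G.connectedComponentMk x) (G.connectedComponentMk y) := by
    intro x y hxy
    rcases hadj x y hxy with h | ⟨hx, hy⟩ | ⟨hx, hy⟩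
    · exact Or.inl (SimpleGraph.ConnectedComponent.eq.mpr h.reachable)
    · subst hx; subst hy; exact Or.inr (Or.inl ⟨rfl, rfl⟩)
    · subst hx; subst hy; exact Or.inr (Or.inr ⟨rfl, rfl⟩)
  have hrtrans : ∀ a b c, r a b → r b c → r a c := by
    intro a b c hab hbc
    rcases hab with h | ⟨h1, h2⟩ | ⟨h1, h2⟩ <;> rcases hbc with h' | ⟨h1', h2'⟩ | ⟨h1', h2'⟩ <;>
      subst_vars <;> simp_all [hr] <;> tauto
  have hkey : ∀ x y, G'.Reachable x y →
      r (G.connectedComponentMk x) (G.connectedComponentMk y) := by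
    intro x y hxy
    obtain ⟨p⟩ := hxy
    induction p with
    | nil => exact Or.inl rfl
    | cons ha _ ih => exact hrtrans _ _ _ (hrstep _ _ ha) ih
  have hcucw : cu ≠ cw := fun hh => hnr (SimpleGraph.ConnectedComponent.eq.mp hh)
  -- bijection from (univ \ {cu}) to all of G'.ConnectedComponent
  have hbij : Set.BijOn f ((Set.univ : Set G.ConnectedComponent) \ {cu}) Set.univ := by
    refine ⟨fun _ _ => Set.mem_univ _, ?_, ?_⟩
    · rintro c ⟨-, hc⟩ c' ⟨-, hc'⟩ hcc
      simp only [Set.mem_singleton_iff] at hc hc'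
      revert hcc hc hc'
      refine SimpleGraph.ConnectedComponent.ind₂ (fun x y => ?_) c c'
      intro hxy hx hy
      have hxy' : G'.Reachable x y := SimpleGraph.ConnectedComponent.eq.mp hxy
      rcases hkey _ _ hxy' with h | ⟨h1, h2⟩ | ⟨h1, h2⟩
      · exact h
      · exact absurd h1 hx
      · exact absurd h2 hy
    · rintro c'' -
      revert c''
      refine SimpleGraph.ConnectedComponent.ind (fun x => ?_)
      by_cases hx : G.connectedComponentMk x = cu
      · refine ⟨cw, ⟨Set.mem_univ _, fun hh => hcucw (hh.symm)⟩, ?_⟩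
        have h2 : G'.Reachable u x :=
          reach_of_reach (fun a b hab => (hle hab).reachable)
            (SimpleGraph.ConnectedComponent.eq.mp hx.symm)
        show f (G.connectedComponentMk w) = G'.connectedComponentMk x
        exact SimpleGraph.ConnectedComponent.eq.mpr (hadj'.symm.reachable.trans h2)
      · exact ⟨_, ⟨Set.mem_univ _, hx⟩, rfl⟩
  have hcard : Nat.card G'.ConnectedComponent =
      Nat.card ((Set.univ : Set G.ConnectedComponent) \ {cu} : Set _) :=
    (Nat.card_congr ((hbij.equiv f).trans (Equiv.Set.univ _))).symm
  rw [hcard, Nat.card_coe_set_eq, Set.ncard_diff_singleton_of_mem (Set.mem_univ _),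
    Set.ncard_univ]
  have : Nonempty G.ConnectedComponent := ⟨cu⟩
  have hpos : 0 < Nat.card G.ConnectedComponent := Nat.card_pos
  omega


variable {E : Type*}

def chi [DecidableEq V] (u : V) : V → ℚ := fun v => if u = v then 1 else 0

def dvec [DecidableEq V] (src tgt : E → V) (e : E) : V → ℚ :=
  chi (src e) - chi (tgt e)

def chiZ [DecidableEq V] (u : V) : V → ℤ := fun v => if u = v then 1 else 0

def dZ [DecidableEq V] (src tgt : E → V) (e : E) : V → ℤ :=
  chiZ (src e) - chiZ (tgt e)



variable [DecidableEq V] [DecidableEq E] {src tgt : E → V}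

/-- the simple graph underlying edge set A -/
def gph (src tgt : E → V) (A : Finset E) : SimpleGraph V :=
  SimpleGraph.fromRel fun x y => ∃ e ∈ A, s(src e, tgt e) = s(x, y)

lemma gph_adj {A : Finset E} {x y : V} :
    (gph src tgt A).Adj x y ↔ x ≠ y ∧ (∃ e ∈ A,
      (src e = x ∧ tgt e = y) ∨ (src e = y ∧ tgt e = x)) := by
  rw [gph, SimpleGraph.fromRel_adj]
  constructor
  · rintro ⟨hxy, h | h⟩ <;> obtain ⟨e, he, hs⟩ := h <;>
      rw [Sym2.eq_iff] at hs <;> refine ⟨hxy, e, he, ?_⟩ <;> tauto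
  · rintro ⟨hxy, e, he, h⟩
    refine ⟨hxy, Or.inl ⟨e, he, ?_⟩⟩
    rw [Sym2.eq_iff]; tauto

lemma gph_mono {A B : Finset E} (h : A ⊆ B) : gph src tgt A ≤ gph src tgt B := by
  intro x y hxy
  rw [gph_adj] at hxy ⊢
  obtain ⟨hne, e, he, hh⟩ := hxy
  exact ⟨hne, e, h he, hh⟩

lemma gph_numComponents (A : Finset E) :
    numComponents (fun e => s(src e, tgt e)) A = Nat.card (gph src tgt A).ConnectedComponent := rfl

lemma chi_sub_mem_span {A : Finset E} {x y : V}
    (h : (gph src tgt A).Reachable x y) :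
    chi x - chi y ∈ Submodule.span ℚ (dvec src tgt '' ↑A) := by
  obtain ⟨p⟩ := h
  induction p with
  | nil => simp
  | @cons a b c ha _ ih =>
    have hab : chi a - chi b ∈ Submodule.span ℚ (dvec src tgt '' ↑A) := by
      rw [gph_adj] at ha
      obtain ⟨-, e, he, h | h⟩ := ha
      · have : chi a - chi b = dvec src tgt e := by rw [dvec, h.1, h.2]
        rw [this]
        exact Submodule.subset_span ⟨e, by simpa using he, rfl⟩
      · have : chi a - chi b = -dvec src tgt e := by rw [dvec, h.1, h.2]; abel
        rw [this]
        exact Submodule.neg_mem _ (Submodule.subset_span ⟨e, by simpa using he, rfl⟩)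
    have : chi a - chi c = (chi a - chi b) + (chi b - chi c) := by abel
    rw [this]
    exact Submodule.add_mem _ hab ih

lemma dvec_not_mem_span [Fintype V] {A : Finset E} {e : E}
    (hnr : ¬ (gph src tgt A).Reachable (src e) (tgt e)) (hne : src e ≠ tgt e) :
    dvec src tgt e ∉ Submodule.span ℚ (dvec src tgt '' ↑A) := by
  classical
  set S : Finset V := Finset.univ.filter (fun v => (gph src tgt A).Reachable (src e) v) with hS
  set φ : (V → ℚ) →ₗ[ℚ] ℚ := ∑ v ∈ S, LinearMap.proj v with hφ
  have hφ_apply : ∀ x : V → ℚ, φ x = ∑ v ∈ S, x v := by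
    intro x
    rw [hφ]
    simp [LinearMap.sum_apply]
  have hφ_chi : ∀ u : V, φ (chi u) = if u ∈ S then 1 else 0 := by
    intro u
    rw [hφ_apply]
    simp only [chi]
    rw [Finset.sum_ite_eq S u (fun _ => (1:ℚ))]
  have hmemS : ∀ u : V, u ∈ S ↔ (gph src tgt A).Reachable (src e) u := by
    intro u; rw [hS]; simp
  intro hmem
  have hker : ∀ x ∈ Submodule.span ℚ (dvec src tgt '' ↑A), φ x = 0 := by
    intro x hx
    have hle : Submodule.span ℚ (dvec src tgt '' ↑A) ≤ LinearMap.ker φ := by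
      rw [Submodule.span_le]
      rintro _ ⟨f, hf, rfl⟩
      simp only [Finset.mem_coe] at hf
      have hreach : ((src f) ∈ S) ↔ ((tgt f) ∈ S) := by
        rw [hmemS, hmemS]
        by_cases hl : src f = tgt f
        · rw [hl]
        · have hadj : (gph src tgt A).Adj (src f) (tgt f) :=
            gph_adj.mpr ⟨hl, f, hf, Or.inl ⟨rfl, rfl⟩⟩
          exact ⟨fun h => h.trans hadj.reachable, fun h => h.trans hadj.symm.reachable⟩
      have : φ (dvec src tgt f) = 0 := by
        rw [dvec, map_sub, hφ_chi, hφ_chi]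
        by_cases h1 : src f ∈ S
        · rw [if_pos h1, if_pos (hreach.mp h1)]; ring
        · rw [if_neg h1, if_neg (fun hh => h1 (hreach.mpr hh))]; ring
      exact this
    exact hle hx
  have h1 : φ (dvec src tgt e) = 1 := by
    rw [dvec, map_sub, hφ_chi, hφ_chi]
    have hs : src e ∈ S := (hmemS _).mpr (SimpleGraph.Reachable.refl _)
    have ht : tgt e ∉ S := fun h => hnr ((hmemS _).mp h)
    rw [if_pos hs, if_neg ht]; ring
  have := hker _ hmem
  rw [h1] at this
  exact one_ne_zero this

lemma dvec_ne_zero {e : E} (hne : src e ≠ tgt e) : dvec src tgt e ≠ 0 := by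
  intro h
  have := congrFun h (src e)
  simp [dvec, chi, Ne.symm hne] at this

lemma comp_rank [Fintype V] [Fintype E] (A : Finset E) :
    numComponents (fun e => s(src e, tgt e)) A
      + Module.finrank ℚ (Submodule.span ℚ (dvec src tgt '' ↑A)) = Fintype.card V := by
  classical
  induction A using Finset.induction_on with
  | empty =>
    have hg : gph src tgt (∅ : Finset E) = ⊥ := by
      ext x y
      simp [gph_adj]
    rw [gph_numComponents, hg, card_cc_bot]
    simp
  | @insert e A he ih =>
    have hins : (dvec src tgt '' ↑(insert e A)) = insert (dvec src tgt e) (dvec src tgt '' ↑A) := by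
      rw [Finset.coe_insert, Set.image_insert_eq]
    have hle : gph src tgt A ≤ gph src tgt (insert e A) := gph_mono (Finset.subset_insert e A)
    have hadj : ∀ x y, (gph src tgt (insert e A)).Adj x y →
        (gph src tgt A).Adj x y ∨ (x = src e ∧ y = tgt e) ∨ (x = tgt e ∧ y = src e) := by
      intro x y hxy
      rw [gph_adj] at hxy
      obtain ⟨hne, f, hf, hh⟩ := hxy
      rcases Finset.mem_insert.mp hf with rfl | hf
      · rcases hh with ⟨h1, h2⟩ | ⟨h1, h2⟩
        · exact Or.inr (Or.inl ⟨h1.symm, h2.symm⟩)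
        · exact Or.inr (Or.inr ⟨h2.symm, h1.symm⟩)
      · exact Or.inl (gph_adj.mpr ⟨hne, f, hf, hh⟩)
    by_cases hloop : src e = tgt e
    · -- loop: both graph and span are unchanged
      have hg : gph src tgt (insert e A) = gph src tgt A := by
        apply le_antisymm _ hle
        intro x y hxy
        rcases hadj x y hxy with h | ⟨h1, h2⟩ | ⟨h1, h2⟩
        · exact h
        · exact absurd (h1.trans (hloop.trans h2.symm)) hxy.ne
        · exact absurd (h1.trans (hloop.symm.trans h2.symm)) hxy.ne
      have hz : dvec src tgt e = 0 := by
        rw [dvec, hloop]; abel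
      rw [gph_numComponents, hg, ← gph_numComponents, hins, hz,
        Submodule.span_insert_zero]
      exact ih
    · by_cases hreach : (gph src tgt A).Reachable (src e) (tgt e)
      · -- endpoints already connected
        have hk : Nat.card (gph src tgt (insert e A)).ConnectedComponent
            = Nat.card (gph src tgt A).ConnectedComponent := by
          apply card_cc_eq_of_reach hle
          intro x y hxy
          rcases hadj x y hxy with h | ⟨h1, h2⟩ | ⟨h1, h2⟩
          · exact h.reachable
          · subst h1; subst h2; exact hreach
          · subst h1; subst h2; exact hreach.symm
        have hsp : Submodule.span ℚ (insert (dvec src tgt e) (dvec src tgt '' ↑A))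
            = Submodule.span ℚ (dvec src tgt '' ↑A) :=
          Submodule.span_insert_eq_span (chi_sub_mem_span hreach)
        rw [gph_numComponents, hk, ← gph_numComponents, hins, hsp]
        exact ih
      · -- new edge joins two components
        have hadj' : (gph src tgt (insert e A)).Adj (src e) (tgt e) :=
          gph_adj.mpr ⟨hloop, e, Finset.mem_insert_self e A, Or.inl ⟨rfl, rfl⟩⟩
        have hk := card_cc_merge hle hadj hadj' hreach
        have hnm : dvec src tgt e ∉ Submodule.span ℚ (dvec src tgt '' ↑A) :=
          dvec_not_mem_span hreach hloop
        have hsp : Module.finrank ℚ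
              (Submodule.span ℚ (insert (dvec src tgt e) (dvec src tgt '' ↑A)))
            = Module.finrank ℚ (Submodule.span ℚ (dvec src tgt '' ↑A)) + 1 := by
          rw [Submodule.span_insert]
          have hinf : (Submodule.span ℚ {dvec src tgt e}) ⊓ Submodule.span ℚ (dvec src tgt '' ↑A) = ⊥ := by
            rw [eq_bot_iff]
            intro x hx
            rw [Submodule.mem_inf] at hx
            obtain ⟨hx1, hx2⟩ := hx
            rw [Submodule.mem_span_singleton] at hx1
            obtain ⟨c, rfl⟩ := hx1
            rcases eq_or_ne c 0 with rfl | hc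
            · simp [Submodule.mem_bot]
            · exfalso
              apply hnm
              have := Submodule.smul_mem _ c⁻¹ hx2
              rwa [smul_smul, inv_mul_cancel₀ hc, one_smul] at this
          have := Submodule.finrank_sup_add_finrank_inf_eq
            (Submodule.span ℚ {dvec src tgt e}) (Submodule.span ℚ (dvec src tgt '' ↑A))
          rw [hinf] at this
          have h1 : Module.finrank ℚ (Submodule.span ℚ {dvec src tgt e}) = 1 := by
            exact finrank_span_singleton (dvec_ne_zero hloop)
          simp only [finrank_bot] at this
          omega
        rw [gph_numComponents, hins, hsp]
        rw [gph_numComponents] at ih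
        omega

open Classical in
/-- number of subsets whose associated family of vectors is linearly independent -/
noncomputable def countIndep {M : Type*} [Fintype E] [AddCommGroup M] [Module ℚ M]
    (w : E → M) : ℕ :=
  ((Finset.univ : Finset (Finset E)).filter
    (fun A => LinearIndependent ℚ (fun e : {x // x ∈ A} => w e.1))).card

lemma range_fam {M : Type*} (w : E → M) (A : Finset E) :
    Set.range (fun e : ↥A => w e) = w '' ↑A := by
  ext m
  simp

lemma indep_iff_rank_eq {M : Type*} [AddCommGroup M] [Module ℚ M] (w : E → M) (A : Finset E) :
    LinearIndependent ℚ (fun e : ↥A => w e)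
      ↔ A.card = Module.finrank ℚ (Submodule.span ℚ (w '' ↑A)) := by
  rw [linearIndependent_iff_card_eq_finrank_span, range_fam, Fintype.card_coe]
  rfl

lemma rank_le_card {M : Type*} [AddCommGroup M] [Module ℚ M] (w : E → M) (A : Finset E) :
    Module.finrank ℚ (Submodule.span ℚ (w '' ↑A)) ≤ A.card := by
  classical
  have h1 : (w '' ↑A) = ↑(A.image w) := by rw [Finset.coe_image]
  rw [h1]
  exact le_trans (finrank_span_finset_le_card (A.image w)) (Finset.card_image_le)

lemma tutte_eq_countIndep [DecidableEq V] [DecidableEq E] [Fintype V] [Fintype E]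
    (src tgt : E → V) :
    tutteEval (fun e => s(src e, tgt e)) 2 1 = (countIndep (dvec src tgt) : ℤ) := by
  classical
  rw [tutteEval]
  have hterm : ∀ A : Finset E,
      ((2:ℤ) - 1) ^ (numComponents (fun e => s(src e, tgt e)) A
          - numComponents (fun e => s(src e, tgt e)) Finset.univ) *
        ((1:ℤ) - 1) ^ (numComponents (fun e => s(src e, tgt e)) A + A.card - Fintype.card V)
      = if LinearIndependent ℚ (fun e : ↥A => dvec src tgt e) then 1 else 0 := by
    intro A
    have hk := comp_rank (src := src) (tgt := tgt) A
    have hr := rank_le_card (dvec src tgt) A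
    set r := Module.finrank ℚ (Submodule.span ℚ (dvec src tgt '' ↑A)) with hrdef
    have hexp : numComponents (fun e => s(src e, tgt e)) A + A.card - Fintype.card V
        = A.card - r := by omega
    rw [hexp]
    simp only [sub_self]
    by_cases hind : LinearIndependent ℚ (fun e : ↥A => dvec src tgt e)
    · have : A.card = r := (indep_iff_rank_eq _ _).mp hind
      rw [if_pos hind, ← this, Nat.sub_self, pow_zero]
      norm_num
    · have : A.card ≠ r := fun h => hind ((indep_iff_rank_eq _ _).mpr h)
      rw [if_neg hind, zero_pow (by omega), mul_zero]
  rw [Finset.sum_congr rfl (fun A _ => hterm A), ← Finset.sum_filter, Finset.sum_const,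
    nsmul_eq_mul, mul_one, countIndep]


def netSum [DecidableEq V] [DecidableEq E] (src tgt : E → V) (A : Finset E) : V → ℤ :=
  fun v => ((A.filter fun e => src e = v).card : ℤ) - ((A.filter fun e => tgt e = v).card : ℤ)

variable [DecidableEq V] [DecidableEq E] {src tgt : E → V}

lemma netSum_insert {A : Finset E} {e : E} (he : e ∉ A) :
    netSum src tgt (insert e A) = netSum src tgt A + dZ src tgt e := by
  funext v
  have hs : e ∉ A.filter (fun e => src e = v) := fun h => he (Finset.mem_filter.mp h).1
  have ht : e ∉ A.filter (fun e => tgt e = v) := fun h => he (Finset.mem_filter.mp h).1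
  simp only [netSum, dZ, chiZ, Pi.add_apply, Pi.sub_apply, Finset.filter_insert]
  by_cases h1 : src e = v <;> by_cases h2 : tgt e = v <;>
    simp only [h1, h2, if_true, if_false, if_pos, if_neg, not_false_iff,
      Finset.card_insert_of_notMem hs, Finset.card_insert_of_notMem ht] <;>
    push_cast <;> ring

lemma netSum_erase {A : Finset E} {e : E} (he : e ∈ A) :
    netSum src tgt A = netSum src tgt (A.erase e) + dZ src tgt e := by
  have h := netSum_insert (src := src) (tgt := tgt) (A := A.erase e) (e := e)
    (Finset.notMem_erase e A)
  rwa [Finset.insert_erase he] at h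

/-- The key interval lemma: walking the deficiency towards `w`. -/
lemma interval_aux (src tgt : E → V) :
    ∀ (m : ℕ) (A B : Finset E) (c : V → ℤ) (w v : V),
      (A \ B).card + (B \ A).card = m →
      netSum src tgt B = netSum src tgt A + c →
      (∀ x, x ≠ w → 0 ≤ c x) →
      v ≠ w → 0 < c v →
      ∃ C : Finset E, netSum src tgt C = netSum src tgt A + chiZ v - chiZ w := by
  intro m
  induction m using Nat.strong_induction_on with
  | _ m ih =>
    intro A B c w v hm hBA hc hvw hcv
    -- find a toggle edge at v
    have hkey : (∃ e ∈ B \ A, src e = v) ∨ (∃ e ∈ A \ B, tgt e = v) := by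
      by_contra hcon
      push_neg at hcon
      obtain ⟨h1, h2⟩ := hcon
      have hs : B.filter (fun e => src e = v) ⊆ A.filter (fun e => src e = v) := by
        intro e hee
        rw [Finset.mem_filter] at hee ⊢
        refine ⟨?_, hee.2⟩
        by_contra hea
        exact absurd hee.2 (h1 e (Finset.mem_sdiff.mpr ⟨hee.1, hea⟩))
      have ht : A.filter (fun e => tgt e = v) ⊆ B.filter (fun e => tgt e = v) := by
        intro e hee
        rw [Finset.mem_filter] at hee ⊢
        refine ⟨?_, hee.2⟩
        by_contra heb
        exact absurd hee.2 (h2 e (Finset.mem_sdiff.mpr ⟨hee.1, heb⟩))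
      have h3 := Finset.card_le_card hs
      have h4 := Finset.card_le_card ht
      have h5 : netSum src tgt B v = netSum src tgt A v + c v := by rw [hBA]; rfl
      simp only [netSum] at h5
      omega
    -- common continuation
    have hcont : ∀ (A1 : Finset E) (v1 : V),
        netSum src tgt A1 = netSum src tgt A + chiZ v - chiZ v1 →
        (A1 \ B).card + (B \ A1).card + 1 = m →
        ∃ C : Finset E, netSum src tgt C = netSum src tgt A + chiZ v - chiZ w := by
      intro A1 v1 hA1 hm1
      by_cases hv1w : v1 = w
      · exact ⟨A1, by rw [hA1, hv1w]⟩
      · -- recurse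
        set c1 : V → ℤ := c - chiZ v + chiZ v1 with hc1
        have hBA1 : netSum src tgt B = netSum src tgt A1 + c1 := by
          rw [hA1, hBA, hc1]; abel
        have hc1nn : ∀ x, x ≠ w → 0 ≤ c1 x := by
          intro x hx
          have h0 := hc x hx
          have h1 : c1 x = c x - (if v = x then 1 else 0) + (if v1 = x then 1 else 0) := by
            simp [hc1, chiZ]
          by_cases e1 : v = x
          · rw [h1, if_pos e1]
            rw [← e1] at h0 ⊢
            split_ifs <;> omega
          · rw [h1, if_neg e1]
            split_ifs <;> omega
        have hc1v1 : 0 < c1 v1 := by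
          have h1 : c1 v1 = c v1 - (if v = v1 then 1 else 0) + 1 := by simp [hc1, chiZ]
          by_cases e1 : v = v1
          · rw [h1, if_pos e1, ← e1]
            omega
          · rw [h1, if_neg e1]
            have := hc v1 hv1w
            omega
        have hlt : (A1 \ B).card + (B \ A1).card < m := by omega
        obtain ⟨C, hC⟩ := ih ((A1 \ B).card + (B \ A1).card) hlt A1 B c1 w v1 rfl hBA1 hc1nn
          hv1w hc1v1
        exact ⟨C, by rw [hC, hA1]; abel⟩
    rcases hkey with ⟨e, he, hev⟩ | ⟨e, he, hev⟩
    · rw [Finset.mem_sdiff] at he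
      refine hcont (insert e A) (tgt e) ?_ ?_
      · rw [netSum_insert he.2, dZ, hev]; abel
      · have h1 : insert e A \ B = A \ B := by
          ext x
          simp only [Finset.mem_sdiff, Finset.mem_insert]
          constructor
          · rintro ⟨rfl | hx, hxb⟩
            · exact absurd he.1 hxb
            · exact ⟨hx, hxb⟩
          · tauto
        have h2 : B \ insert e A = (B \ A).erase e := by
          ext x
          simp only [Finset.mem_sdiff, Finset.mem_insert, Finset.mem_erase]
          tauto
        rw [h1, h2, Finset.card_erase_of_mem (Finset.mem_sdiff.mpr he)]
        have hpos : 0 < (B \ A).card := Finset.card_pos.mpr ⟨e, Finset.mem_sdiff.mpr he⟩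
        omega
    · rw [Finset.mem_sdiff] at he
      refine hcont (A.erase e) (src e) ?_ ?_
      · have h := netSum_erase (src := src) (tgt := tgt) he.1
        rw [eq_sub_iff_add_eq.mpr h.symm, dZ, hev]
        abel
      · have h1 : A.erase e \ B = (A \ B).erase e := by
          ext x
          simp only [Finset.mem_sdiff, Finset.mem_erase]
          tauto
        have h2 : B \ A.erase e = B \ A := by
          ext x
          simp only [Finset.mem_sdiff, Finset.mem_erase]
          constructor
          · rintro ⟨hxb, hx⟩
            refine ⟨hxb, fun hxa => ?_⟩
            exact hx ⟨fun hh => he.2 (hh ▸ hxb), hxa⟩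
          · rintro ⟨hxb, hxa⟩
            exact ⟨hxb, fun hh => hxa hh.2⟩
        rw [h1, h2, Finset.card_erase_of_mem (Finset.mem_sdiff.mpr he)]
        have hpos : 0 < (A \ B).card := Finset.card_pos.mpr ⟨e, Finset.mem_sdiff.mpr he⟩
        omega

/-- contraction map of vertices: send `u` to `w` -/
def ctr (u : V) (w : {x : V // x ≠ u}) : V → {x : V // x ≠ u} :=
  fun x => if h : x = u then w else ⟨x, h⟩

/-- pushforward on integer vectors -/
def pz (u : V) (w : {x : V // x ≠ u}) (f : V → ℤ) : {x : V // x ≠ u} → ℤ :=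
  fun v' => f v'.1 + (if v'.1 = w.1 then f u else 0)

lemma ctr_eq_iff {u : V} {w : {x : V // x ≠ u}} {x : V} {v' : {x : V // x ≠ u}} :
    ctr u w x = v' ↔ (x = v'.1 ∨ (x = u ∧ v'.1 = w.1)) := by
  rw [ctr]
  by_cases hx : x = u
  · subst hx
    rw [dif_pos rfl]
    constructor
    · rintro rfl
      exact Or.inr ⟨rfl, rfl⟩
    · rintro (h | ⟨-, h⟩)
      · exact absurd h.symm v'.2
      · exact Subtype.ext h.symm
  · rw [dif_neg hx]
    rw [Subtype.ext_iff]
    constructor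
    · intro h
      exact Or.inl h
    · rintro (h | ⟨h, -⟩)
      · exact h
      · exact absurd h hx

lemma card_ctr [DecidableEq E] (u : V) (w : {x : V // x ≠ u}) (g : E → V) (A : Finset E)
    (v' : {x : V // x ≠ u}) :
    (A.filter (fun e => ctr u w (g e) = v')).card
      = (A.filter (fun e => g e = v'.1)).card
        + (if v'.1 = w.1 then (A.filter (fun e => g e = u)).card else 0) := by
  by_cases hv : v'.1 = w.1
  · rw [if_pos hv]
    have h1 : A.filter (fun e => ctr u w (g e) = v')
        = A.filter (fun e => g e = v'.1 ∨ g e = u) := by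
      apply Finset.filter_congr
      intro e _
      rw [ctr_eq_iff]
      simp [hv]
    have hdis : Disjoint (A.filter (fun e => g e = v'.1)) (A.filter (fun e => g e = u)) := by
      rw [Finset.disjoint_left]
      intro e he1 he2
      exact v'.2 (((Finset.mem_filter.mp he1).2).symm.trans (Finset.mem_filter.mp he2).2)
    rw [h1, Finset.filter_or, Finset.card_union_of_disjoint hdis]
  · rw [if_neg hv, add_zero]
    apply congrArg
    apply Finset.filter_congr
    intro e _
    rw [ctr_eq_iff]
    simp [hv]

lemma pz_netSum [DecidableEq E] (u : V) (w : {x : V // x ≠ u}) (src tgt : E → V)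
    (A : Finset E) :
    pz u w (netSum src tgt A) = netSum (ctr u w ∘ src) (ctr u w ∘ tgt) A := by
  funext v'
  simp only [pz, netSum, Function.comp_apply]
  rw [card_ctr u w src A v', card_ctr u w tgt A v']
  by_cases hv : v'.1 = w.1 <;> simp [hv] <;> push_cast <;> ring

lemma pz_fiber {u : V} {w : {x : V // x ≠ u}} {x y : V → ℤ} (h : pz u w x = pz u w y) :
    y = x + (y u - x u) • (chiZ u - chiZ w.1) := by
  funext v
  have hw : w.1 ≠ u := w.2
  by_cases hvu : v = u
  · subst hvu
    simp only [Pi.add_apply, Pi.smul_apply, Pi.sub_apply, chiZ, smul_eq_mul, if_true]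
    rw [if_neg hw]
    ring
  · have hv := congrFun h ⟨v, hvu⟩
    simp only [pz] at hv
    by_cases hvw : v = w.1
    · simp only [if_pos hvw] at hv
      simp only [Pi.add_apply, Pi.smul_apply, Pi.sub_apply, chiZ, smul_eq_mul]
      rw [if_neg (fun hh : u = v => hvu hh.symm), if_pos (hvw.symm : w.1 = v)]
      linarith
    · simp only [if_neg hvw] at hv
      simp only [Pi.add_apply, Pi.smul_apply, Pi.sub_apply, chiZ, smul_eq_mul]
      rw [if_neg (fun hh : u = v => hvu hh.symm), if_neg (fun hh : w.1 = v => hvw hh.symm)]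
      linarith

lemma pz_d {u : V} {w : {x : V // x ≠ u}} : pz u w (chiZ u - chiZ w.1) = 0 := by
  funext v'
  have hw : w.1 ≠ u := w.2
  have h1 : ¬ (u = v'.1) := fun hh => v'.2 hh.symm
  simp only [pz, Pi.sub_apply, chiZ, Pi.zero_apply, if_true]
  rw [if_neg h1, if_neg hw]
  by_cases hvw : v'.1 = w.1
  · rw [if_pos hvw, if_pos hvw.symm]
    ring
  · rw [if_neg hvw, if_neg (fun hh : w.1 = v'.1 => hvw hh.symm)]
    ring

lemma pz_add {u : V} {w : {x : V // x ≠ u}} (x y : V → ℤ) :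
    pz u w (x + y) = pz u w x + pz u w y := by
  funext v'
  simp only [pz, Pi.add_apply]
  by_cases hvw : v'.1 = w.1 <;> simp [hvw] <;> ring

/-- pushforward on rational vectors, as a linear map -/
def pq (u : V) (w : {x : V // x ≠ u}) : (V → ℚ) →ₗ[ℚ] ({x : V // x ≠ u} → ℚ) where
  toFun f := fun v' => f v'.1 + (if v'.1 = w.1 then f u else 0)
  map_add' x y := by
    funext v'
    by_cases hvw : v'.1 = w.1 <;> simp [hvw] <;> ring
  map_smul' c x := by
    funext v'
    by_cases hvw : v'.1 = w.1 <;> simp [hvw] <;> ring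

lemma pq_chi (u : V) (w : {x : V // x ≠ u}) (x : V) :
    pq u w (chi x) = chi (ctr u w x) := by
  have hw : (w : V) ≠ u := w.2
  funext v'
  show chi x v'.1 + (if v'.1 = w.1 then chi x u else 0) = chi (ctr u w x) v'
  have hc : chi (ctr u w x) v' = if x = v'.1 ∨ (x = u ∧ v'.1 = w.1) then 1 else 0 := by
    show (if ctr u w x = v' then (1:ℚ) else 0) = _
    by_cases hh : x = v'.1 ∨ (x = u ∧ v'.1 = w.1)
    · rw [if_pos (ctr_eq_iff.mpr hh), if_pos hh]
    · rw [if_neg (fun h2 => hh (ctr_eq_iff.mp h2)), if_neg hh]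
  rw [hc]
  show (if x = v'.1 then (1:ℚ) else 0) + (if v'.1 = w.1 then (if x = u then (1:ℚ) else 0) else 0) = _
  by_cases b1 : x = v'.1
  · by_cases b3 : x = u
    · exact absurd (b1.symm.trans b3) v'.2
    · by_cases b2 : v'.1 = w.1 <;> simp [b1, b2, b3, hw, Ne.symm hw]
  · by_cases b3 : x = u <;> by_cases b2 : v'.1 = w.1 <;> simp [b1, b2, b3, hw, Ne.symm hw]

lemma ker_pq (u : V) (w : {x : V // x ≠ u}) :
    LinearMap.ker (pq u w) = Submodule.span ℚ {chi u - chi w.1} := by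
  have hw : w.1 ≠ u := w.2
  ext x
  rw [LinearMap.mem_ker, Submodule.mem_span_singleton]
  constructor
  · intro hx
    refine ⟨x u, ?_⟩
    funext v
    have hd : (chi u - chi w.1 : V → ℚ) v = (if u = v then 1 else 0) - (if w.1 = v then 1 else 0) := rfl
    simp only [Pi.smul_apply, hd, smul_eq_mul]
    by_cases hvu : v = u
    · subst hvu
      rw [if_pos rfl, if_neg (fun hh : w.1 = v => hw hh)]
      ring
    · have hv := congrFun hx ⟨v, hvu⟩
      simp only [pq, LinearMap.coe_mk, AddHom.coe_mk, Pi.zero_apply] at hv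
      rw [if_neg (fun hh : u = v => hvu hh.symm)]
      by_cases hvw : v = w.1
      · rw [if_pos (hvw.symm : w.1 = v)]
        rw [if_pos hvw] at hv
        linarith
      · rw [if_neg (fun hh : w.1 = v => hvw hh.symm)]
        rw [if_neg hvw] at hv
        linarith
  · rintro ⟨a, rfl⟩
    have h0 : pq u w (chi u - chi w.1) = 0 := by
      rw [map_sub, pq_chi, pq_chi]
      have h1 : ctr u w u = w := by rw [ctr, dif_pos rfl]
      have h2 : ctr u w w.1 = w := by rw [ctr, dif_neg hw]
      rw [h1, h2, sub_self]
    rw [map_smul, h0, smul_zero]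

lemma indep_option_iff {M N : Type*} [AddCommGroup M] [Module ℚ M] [AddCommGroup N]
    [Module ℚ N] (π : M →ₗ[ℚ] N) (d : M) (hd : d ≠ 0)
    (hker : LinearMap.ker π = Submodule.span ℚ {d})
    {ι : Type*} [Fintype ι] (v : ι → M) :
    LinearIndependent ℚ (fun o : Option ι => o.elim d v)
      ↔ LinearIndependent ℚ (fun i => π (v i)) := by
  have hπd : π d = 0 := by
    rw [← LinearMap.mem_ker, hker]
    exact Submodule.mem_span_singleton_self d
  rw [Fintype.linearIndependent_iff, Fintype.linearIndependent_iff]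
  constructor
  · intro h g hg
    have hg' : π (∑ i, g i • v i) = 0 := by
      rw [map_sum]
      simp_rw [map_smul]
      exact hg
    rw [← LinearMap.mem_ker, hker, Submodule.mem_span_singleton] at hg'
    obtain ⟨t, ht⟩ := hg'
    set G : Option ι → ℚ := fun o => o.elim (-t) g with hG
    have hGs : ∑ o : Option ι, G o • (Option.elim o d v) = 0 := by
      rw [Fintype.sum_option]
      simp only [hG, Option.elim]
      rw [← ht, neg_smul]
      exact neg_add_cancel _
    intro i
    exact h G hGs (some i)
  · intro h G hG
    rw [Fintype.sum_option] at hG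
    simp only [Option.elim] at hG
    have hsum : π (∑ i, G (some i) • v i) = 0 := by
      have : ∑ i, G (some i) • v i = -(G none • d) := by
        rw [eq_neg_iff_add_eq_zero, add_comm]
        exact hG
      rw [this, map_neg, map_smul, hπd, smul_zero, neg_zero]
    have hz : ∀ i, G (some i) = 0 := by
      intro i
      apply h (fun i => G (some i))
      rw [map_sum] at hsum
      simpa using hsum
    intro o
    match o with
    | some i => exact hz i
    | none =>
      have : G none • d = 0 := by
        have hs : ∑ i, G (some i) • v i = 0 := by
          apply Finset.sum_eq_zero
          intro i _
          rw [hz i, zero_smul]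
        rw [hs, add_zero] at hG
        exact hG
      rcases smul_eq_zero.mp this with h1 | h1
      · exact h1
      · exact absurd h1 hd


section MasterHelpers

variable {V E : Type*} [DecidableEq V] [DecidableEq E]

lemma netSum_map {src tgt : E → V} {p : E → Prop} [DecidablePred p]
    (B : Finset {x : E // p x}) :
    netSum src tgt (B.map (Function.Embedding.subtype p))
      = netSum (fun e => src e.1) (fun e => tgt e.1) B := by
  funext v
  simp only [netSum, Finset.filter_map, Finset.card_map]
  rfl

lemma netSum_loop {src tgt : E → V} {e0 : E} (h : dZ src tgt e0 = 0) (A : Finset E) :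
    netSum src tgt A = netSum src tgt (A.erase e0) := by
  by_cases he : e0 ∈ A
  · rw [netSum_erase he, h, add_zero]
  · rw [Finset.erase_eq_of_notMem he]

lemma subtype_map_subtype {e0 : E} (B : Finset {e : E // e ≠ e0}) :
    (B.map (Function.Embedding.subtype _)).subtype (· ≠ e0) = B := by
  ext a
  simp only [Finset.mem_subtype, Finset.mem_map, Function.Embedding.coe_subtype]
  constructor
  · rintro ⟨b, hb, hbe⟩
    rwa [← Subtype.ext hbe.symm] at hb
  · intro ha
    exact ⟨a, ha, rfl⟩

lemma map_subtype_of_not_mem {e0 : E} (A : Finset E) (he : e0 ∉ A) :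
    (A.subtype (· ≠ e0)).map (Function.Embedding.subtype _) = A := by
  rw [Finset.subtype_map]
  apply Finset.filter_true_of_mem
  intro x hx hxe
  exact he (hxe ▸ hx)

lemma insert_map_subtype_of_mem {e0 : E} (A : Finset E) (he : e0 ∈ A) :
    insert e0 ((A.subtype (· ≠ e0)).map (Function.Embedding.subtype _)) = A := by
  rw [Finset.subtype_map]
  have : A.filter (· ≠ e0) = A.erase e0 := by
    ext x
    simp [Finset.mem_erase, and_comm]
  rw [this, Finset.insert_erase he]

lemma subtype_insert_map {e0 : E} (B : Finset {e : E // e ≠ e0}) :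
    (insert e0 (B.map (Function.Embedding.subtype _))).subtype (· ≠ e0) = B := by
  ext a
  simp only [Finset.mem_subtype, Finset.mem_insert, Finset.mem_map,
    Function.Embedding.coe_subtype]
  constructor
  · rintro (h | ⟨b, hb, hbe⟩)
    · exact absurd h a.2
    · rwa [← Subtype.ext hbe.symm] at hb
  · intro ha
    exact Or.inr ⟨a, ha, rfl⟩

/-- first counting bijection: subsets avoiding `e0` -/
lemma card_filter_notmem_bij [Fintype E] (e0 : E) (p : Finset E → Prop)
    (q : Finset {e : E // e ≠ e0} → Prop) [DecidablePred p] [DecidablePred q]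
    (hpq : ∀ B : Finset {e : E // e ≠ e0}, p (B.map (Function.Embedding.subtype _)) ↔ q B) :
    ((Finset.univ : Finset (Finset E)).filter (fun A => p A ∧ e0 ∉ A)).card
      = ((Finset.univ : Finset (Finset {e : E // e ≠ e0})).filter q).card := by
  apply Finset.card_bij (i := fun A _ => A.subtype (· ≠ e0))
  · intro A hA
    rw [Finset.mem_filter] at hA ⊢
    obtain ⟨-, hp, he⟩ := hA
    refine ⟨Finset.mem_univ _, ?_⟩
    rw [← hpq, map_subtype_of_not_mem A he]
    exact hp
  · intro A hA A' hA' h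
    rw [Finset.mem_filter] at hA hA'
    rw [← map_subtype_of_not_mem A hA.2.2, ← map_subtype_of_not_mem A' hA'.2.2, h]
  · intro B hB
    rw [Finset.mem_filter] at hB
    refine ⟨B.map (Function.Embedding.subtype _), Finset.mem_filter.mpr
      ⟨Finset.mem_univ _, (hpq B).mpr hB.2, ?_⟩, subtype_map_subtype B⟩
    intro hmem
    obtain ⟨b, -, hbe⟩ := Finset.mem_map.mp hmem
    exact b.2 hbe

/-- second counting bijection: subsets containing `e0` -/
lemma card_filter_mem_bij [Fintype E] (e0 : E) (p : Finset E → Prop)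
    (q : Finset {e : E // e ≠ e0} → Prop) [DecidablePred p] [DecidablePred q]
    (hpq : ∀ B : Finset {e : E // e ≠ e0},
      p (insert e0 (B.map (Function.Embedding.subtype _))) ↔ q B) :
    ((Finset.univ : Finset (Finset E)).filter (fun A => p A ∧ e0 ∈ A)).card
      = ((Finset.univ : Finset (Finset {e : E // e ≠ e0})).filter q).card := by
  apply Finset.card_bij (i := fun A _ => A.subtype (· ≠ e0))
  · intro A hA
    rw [Finset.mem_filter] at hA ⊢
    obtain ⟨-, hp, he⟩ := hA
    refine ⟨Finset.mem_univ _, ?_⟩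
    rw [← hpq, insert_map_subtype_of_mem A he]
    exact hp
  · intro A hA A' hA' h
    rw [Finset.mem_filter] at hA hA'
    rw [← insert_map_subtype_of_mem A hA.2.2, ← insert_map_subtype_of_mem A' hA'.2.2, h]
  · intro B hB
    rw [Finset.mem_filter] at hB
    refine ⟨insert e0 (B.map (Function.Embedding.subtype _)), Finset.mem_filter.mpr
      ⟨Finset.mem_univ _, (hpq B).mpr hB.2, Finset.mem_insert_self _ _⟩,
      subtype_insert_map B⟩

/-- index equivalence for subsets avoiding e0 -/
noncomputable def eqv1 (e0 : E) (B : Finset {e : E // e ≠ e0}) :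
    {x : {e : E // e ≠ e0} // x ∈ B}
      ≃ {y : E // y ∈ B.map (Function.Embedding.subtype _)} :=
  Equiv.ofBijective (fun x => ⟨x.1.1, Finset.mem_map_of_mem _ x.2⟩) (by
    constructor
    · intro x x' h
      exact Subtype.ext (Subtype.ext (Subtype.mk_eq_mk.mp h))
    · intro y
      obtain ⟨b, hb, hbe⟩ := Finset.mem_map.mp y.2
      exact ⟨⟨b, hb⟩, Subtype.ext hbe⟩)

@[simp] lemma eqv1_apply (e0 : E) (B : Finset {e : E // e ≠ e0})
    (x : {x : {e : E // e ≠ e0} // x ∈ B}) : ((eqv1 e0 B) x).1 = x.1.1 := rfl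

/-- index equivalence for subsets containing e0 -/
noncomputable def eqv2 (e0 : E) (B : Finset {e : E // e ≠ e0}) :
    Option {x : {e : E // e ≠ e0} // x ∈ B}
      ≃ {y : E // y ∈ insert e0 (B.map (Function.Embedding.subtype _))} :=
  Equiv.ofBijective (fun o => o.elim ⟨e0, Finset.mem_insert_self _ _⟩
    (fun x => ⟨x.1.1, Finset.mem_insert_of_mem (Finset.mem_map_of_mem _ x.2)⟩)) (by
    constructor
    · intro o o' h
      match o, o' with
      | none, none => rfl
      | none, some x => exact absurd (Subtype.mk_eq_mk.mp h).symm x.1.2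
      | some x, none => exact absurd (Subtype.mk_eq_mk.mp h) x.1.2
      | some x, some x' =>
        exact congrArg some (Subtype.ext (Subtype.ext (Subtype.mk_eq_mk.mp h)))
    · intro y
      rcases Finset.mem_insert.mp y.2 with h' | h'
      · exact ⟨none, Subtype.ext h'.symm⟩
      · obtain ⟨b, hb, hbe⟩ := Finset.mem_map.mp h'
        exact ⟨some ⟨b, hb⟩, Subtype.ext hbe⟩)

end MasterHelpers

theorem master (n : ℕ) : ∀ {V E : Type*} [Fintype V] [Fintype E] [DecidableEq V]
    [DecidableEq E] (src tgt : E → V), Fintype.card E = n →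
    ((Finset.univ : Finset (Finset E)).image (netSum src tgt)).card
      = countIndep (dvec src tgt) := by
  induction n using Nat.strong_induction_on with
  | _ n ih =>
  intro V E _ _ _ _ src tgt hn
  classical
  rcases isEmpty_or_nonempty E with hE | hE
  · -- no edges
    have huniv : (Finset.univ : Finset (Finset E)) = {∅} := by
      apply Finset.eq_singleton_iff_unique_mem.mpr
      exact ⟨Finset.mem_univ _, fun A _ =>
        Finset.eq_empty_of_forall_notMem (fun x => (hE.false x).elim)⟩
    have hind : LinearIndependent ℚ (fun x : {x // x ∈ (∅ : Finset E)} => dvec src tgt x.1) := by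
      have : IsEmpty {x : E // x ∈ (∅ : Finset E)} := ⟨fun x => (Finset.notMem_empty _ x.2)⟩
      exact linearIndependent_empty_type
    rw [huniv, Finset.image_singleton, Finset.card_singleton]
    unfold countIndep
    rw [huniv, Finset.filter_singleton, if_pos hind, Finset.card_singleton]
  · obtain ⟨e0⟩ := hE
    have hnpos : 0 < n := hn ▸ Fintype.card_pos_iff.mpr ⟨e0⟩
    have hcardE' : Fintype.card {e : E // e ≠ e0} = n - 1 := by
      rw [Fintype.card_subtype_compl, Fintype.card_subtype_eq, hn]
    set emb : {e : E // e ≠ e0} ↪ E := Function.Embedding.subtype _ with hemb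
    set src' : {e : E // e ≠ e0} → V := fun e => src e.1 with hsrc'
    set tgt' : {e : E // e ≠ e0} → V := fun e => tgt e.1 with htgt'
    have hihdel := ih (n-1) (by omega) src' tgt' hcardE'
    have hfilter_erase : ∀ A : Finset E, A.filter (· ≠ e0) = A.erase e0 := by
      intro A
      ext y
      simp [Finset.mem_erase, and_comm]
    by_cases hloop : src e0 = tgt e0
    · -- loop case
      have hdz : dZ src tgt e0 = 0 := by rw [dZ, hloop, sub_self]
      have himg : ((Finset.univ : Finset (Finset E)).image (netSum src tgt))
          = ((Finset.univ : Finset (Finset {e : E // e ≠ e0})).image (netSum src' tgt')) := by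
        apply Finset.Subset.antisymm
        · intro x hx
          obtain ⟨A, -, rfl⟩ := Finset.mem_image.mp hx
          refine Finset.mem_image.mpr ⟨A.subtype (· ≠ e0), Finset.mem_univ _, ?_⟩
          rw [← netSum_map, Finset.subtype_map, hfilter_erase, ← netSum_loop hdz]
        · intro x hx
          obtain ⟨B, -, rfl⟩ := Finset.mem_image.mp hx
          exact Finset.mem_image.mpr ⟨B.map emb, Finset.mem_univ _, netSum_map B⟩
      have hnoind : ∀ A : Finset E, e0 ∈ A →
          ¬ LinearIndependent ℚ (fun x : {x // x ∈ A} => dvec src tgt x.1) := by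
        intro A he0 hind
        exact hind.ne_zero ⟨e0, he0⟩
          (show dvec src tgt e0 = 0 by rw [dvec, hloop, sub_self])
      have hci : countIndep (dvec src tgt) = countIndep (dvec src' tgt') := by
        unfold countIndep
        have h1 : ∀ A ∈ (Finset.univ : Finset (Finset E)),
            (LinearIndependent ℚ (fun x : {x // x ∈ A} => dvec src tgt x.1))
              ↔ ((LinearIndependent ℚ (fun x : {x // x ∈ A} => dvec src tgt x.1))
                  ∧ e0 ∉ A) := by
          intro A _
          exact ⟨fun h => ⟨h, fun hmem => hnoind A hmem h⟩, And.left⟩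
        rw [Finset.filter_congr h1]
        apply card_filter_notmem_bij e0 _ _
        intro B
        exact (linearIndependent_equiv (eqv1 e0 B)).symm
      rw [himg, hci]
      exact hihdel
    · -- non-loop case
      have hne : src e0 ≠ tgt e0 := hloop
      set u := src e0 with hu
      set w : {x : V // x ≠ u} := ⟨tgt e0, fun h => hne h.symm⟩ with hw
      set d : V → ℤ := dZ src tgt e0 with hdd
      have hdchi : d = chiZ u - chiZ w.1 := rfl
      set srcc : {e : E // e ≠ e0} → {x : V // x ≠ u} := fun e => ctr u w (src e.1) with hsrcc
      set tgtc : {e : E // e ≠ e0} → {x : V // x ≠ u} := fun e => ctr u w (tgt e.1) with htgtc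
      have hihctr := ih (n-1) (by omega) srcc tgtc hcardE'
      set NS' := ((Finset.univ : Finset (Finset {e : E // e ≠ e0})).image (netSum src' tgt'))
        with hNS'
      have hpzB : ∀ B : Finset {e : E // e ≠ e0},
          pz u w (netSum src' tgt' B) = netSum srcc tgtc B := fun B => pz_netSum u w src' tgt' B
      have hmem_map : ∀ B : Finset {e : E // e ≠ e0}, e0 ∉ B.map emb := by
        intro B hmem
        obtain ⟨b, -, hbe⟩ := Finset.mem_map.mp hmem
        exact b.2 hbe
      have himg : ((Finset.univ : Finset (Finset E)).image (netSum src tgt))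
          = NS' ∪ NS'.image (· + d) := by
        ext x
        simp only [Finset.mem_union]
        constructor
        · intro hx
          obtain ⟨A, -, rfl⟩ := Finset.mem_image.mp hx
          by_cases he0 : e0 ∈ A
          · right
            refine Finset.mem_image.mpr ⟨netSum src' tgt' (A.subtype (· ≠ e0)),
              Finset.mem_image.mpr ⟨_, Finset.mem_univ _, rfl⟩, ?_⟩
            rw [← netSum_map, Finset.subtype_map, hfilter_erase]
            rw [netSum_erase (src := src) (tgt := tgt) he0]
          · left
            exact Finset.mem_image.mpr ⟨A.subtype (· ≠ e0), Finset.mem_univ _,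
              by rw [← netSum_map, map_subtype_of_not_mem A he0]⟩
        · intro hx
          rcases hx with hx | hx
          · obtain ⟨B, -, rfl⟩ := Finset.mem_image.mp hx
            exact Finset.mem_image.mpr ⟨B.map emb, Finset.mem_univ _, netSum_map B⟩
          · obtain ⟨x', hx', rfl⟩ := Finset.mem_image.mp hx
            obtain ⟨B, -, rfl⟩ := Finset.mem_image.mp hx'
            refine Finset.mem_image.mpr ⟨insert e0 (B.map emb), Finset.mem_univ _, ?_⟩
            rw [netSum_insert (hmem_map B), netSum_map B]
      have hXcard : ((Finset.univ : Finset (Finset E)).image (netSum src tgt)).card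
          = NS'.card + (NS'.filter (fun x => x + d ∉ NS')).card := by
        rw [himg, ← Finset.union_sdiff_self_eq_union,
          Finset.card_union_of_disjoint Finset.disjoint_sdiff]
        congr 1
        have h2 : NS'.image (· + d) \ NS'
            = (NS'.filter (fun x => x + d ∉ NS')).image (· + d) := by
          ext y
          simp only [Finset.mem_sdiff, Finset.mem_image, Finset.mem_filter]
          constructor
          · rintro ⟨⟨x, hx, rfl⟩, hy⟩
            exact ⟨x, ⟨hx, hy⟩, rfl⟩
          · rintro ⟨x, ⟨hx, hxd⟩, rfl⟩
            exact ⟨⟨x, hx, rfl⟩, hxd⟩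
        rw [h2, Finset.card_image_of_injective _ (add_left_injective d)]
      have hbijc : (NS'.filter (fun x => x + d ∉ NS')).card
          = ((Finset.univ : Finset (Finset {e : E // e ≠ e0})).image (netSum srcc tgtc)).card := by
        apply Finset.card_bij (i := fun x _ => pz u w x)
        · intro x hx
          obtain ⟨B, -, rfl⟩ := Finset.mem_image.mp (Finset.mem_filter.mp hx).1
          exact Finset.mem_image.mpr ⟨B, Finset.mem_univ _, (hpzB B).symm⟩
        · intro x hx y hy hxy
          have hyx := pz_fiber hxy
          obtain ⟨A, -, hA⟩ := Finset.mem_image.mp (Finset.mem_filter.mp hx).1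
          obtain ⟨B, -, hB⟩ := Finset.mem_image.mp (Finset.mem_filter.mp hy).1
          set k := y u - x u with hk
          have hwu : u ≠ w.1 := Ne.symm w.2
          rcases lt_trichotomy k 0 with hk0 | hk0 | hk0
          · exfalso
            have hxy' : netSum src' tgt' A = netSum src' tgt' B + (-k) • (chiZ u - chiZ w.1) := by
              rw [hA, hB, hyx]
              funext t
              simp only [Pi.add_apply, Pi.smul_apply, Pi.sub_apply, smul_eq_mul]
              ring
            have hnn : ∀ t, t ≠ w.1 → 0 ≤ ((-k) • (chiZ u - chiZ w.1) : V → ℤ) t := by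
              intro t ht
              have hwt : ¬ (w.1 = t) := fun h => ht h.symm
              simp only [Pi.smul_apply, Pi.sub_apply, chiZ, smul_eq_mul, if_neg hwt]
              split_ifs <;> omega
            have hpos : 0 < ((-k) • (chiZ u - chiZ w.1) : V → ℤ) u := by
              simp [chiZ, w.2]
              omega
            obtain ⟨C, hC⟩ := interval_aux src' tgt' _ B A ((-k) • (chiZ u - chiZ w.1)) w.1 u
              rfl hxy' hnn hwu hpos
            apply (Finset.mem_filter.mp hy).2
            refine Finset.mem_image.mpr ⟨C, Finset.mem_univ _, ?_⟩
            rw [hC, hB, hdchi]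
            abel
          · rw [hyx, hk0, zero_smul, add_zero]
          · exfalso
            have hxy' : netSum src' tgt' B = netSum src' tgt' A + k • (chiZ u - chiZ w.1) := by
              rw [hA, hB, hyx]
            have hnn : ∀ t, t ≠ w.1 → 0 ≤ (k • (chiZ u - chiZ w.1) : V → ℤ) t := by
              intro t ht
              have hwt : ¬ (w.1 = t) := fun h => ht h.symm
              simp only [Pi.smul_apply, Pi.sub_apply, chiZ, smul_eq_mul, if_neg hwt]
              split_ifs <;> omega
            have hpos : 0 < (k • (chiZ u - chiZ w.1) : V → ℤ) u := by
              simp [chiZ, w.2]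
              omega
            obtain ⟨C, hC⟩ := interval_aux src' tgt' _ A B (k • (chiZ u - chiZ w.1)) w.1 u
              rfl hxy' hnn hwu hpos
            apply (Finset.mem_filter.mp hx).2
            refine Finset.mem_image.mpr ⟨C, Finset.mem_univ _, ?_⟩
            rw [hC, hA, hdchi]
            abel
        · intro t ht
          obtain ⟨B, -, rfl⟩ := Finset.mem_image.mp ht
          have hSne : (NS'.filter (fun y => pz u w y = netSum srcc tgtc B)).Nonempty :=
            ⟨netSum src' tgt' B, Finset.mem_filter.mpr
              ⟨Finset.mem_image.mpr ⟨B, Finset.mem_univ _, rfl⟩, hpzB B⟩⟩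
          obtain ⟨y, hyS, hymax⟩ := Finset.exists_max_image _ (fun y => y u) hSne
          have hyS' := Finset.mem_filter.mp hyS
          refine ⟨y, Finset.mem_filter.mpr ⟨hyS'.1, ?_⟩, hyS'.2⟩
          intro hyd
          have hzd : pz u w (y + d) = netSum srcc tgtc B := by
            rw [hdchi, pz_add, pz_d, add_zero, hyS'.2]
          have hydS : y + d ∈ NS'.filter (fun y => pz u w y = netSum srcc tgtc B) :=
            Finset.mem_filter.mpr ⟨hyd, hzd⟩
          have hmax := hymax _ hydS
          have hyu : (y + d) u = y u + 1 := by
            have : d u = 1 := by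
              rw [hdchi]
              simp [chiZ, w.2]
            simp only [Pi.add_apply, this]
          simp only [hyu] at hmax
          omega
      have hsplitind : countIndep (dvec src tgt)
          = countIndep (dvec src' tgt') + countIndep (dvec srcc tgtc) := by
        unfold countIndep
        have hpart := Finset.card_filter_add_card_filter_not
          (s := (Finset.univ : Finset (Finset E)).filter
            (fun A => LinearIndependent ℚ (fun x : {x // x ∈ A} => dvec src tgt x.1)))
          (p := fun A => e0 ∉ A)
        rw [Finset.filter_filter, Finset.filter_filter] at hpart
        have h1 : ((Finset.univ : Finset (Finset E)).filter
            (fun A => (LinearIndependent ℚ (fun x : {x // x ∈ A} => dvec src tgt x.1))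
              ∧ e0 ∉ A)).card
            = ((Finset.univ : Finset (Finset {e : E // e ≠ e0})).filter
              (fun B => LinearIndependent ℚ
                (fun x : {x // x ∈ B} => dvec src' tgt' x.1))).card := by
          apply card_filter_notmem_bij
          intro B
          exact (linearIndependent_equiv (eqv1 e0 B)).symm
        have h2 : ((Finset.univ : Finset (Finset E)).filter
            (fun A => (LinearIndependent ℚ (fun x : {x // x ∈ A} => dvec src tgt x.1))
              ∧ ¬ e0 ∉ A)).card
            = ((Finset.univ : Finset (Finset {e : E // e ≠ e0})).filter
              (fun B => LinearIndependent ℚ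
                (fun x : {x // x ∈ B} => dvec srcc tgtc x.1))).card := by
          have hmemiff : ∀ A : Finset E, ((LinearIndependent ℚ
              (fun x : {x // x ∈ A} => dvec src tgt x.1)) ∧ ¬ e0 ∉ A)
              ↔ ((LinearIndependent ℚ (fun x : {x // x ∈ A} => dvec src tgt x.1))
                ∧ e0 ∈ A) := by
            intro A
            rw [not_not]
          rw [Finset.filter_congr (fun A _ => hmemiff A)]
          apply card_filter_mem_bij
          intro B
          have hfam : (fun y : {y // y ∈ insert e0 (B.map emb)} => dvec src tgt y.1)
              ∘ (eqv2 e0 B)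
              = fun o : Option {x : {e : E // e ≠ e0} // x ∈ B} =>
                  o.elim (dvec src tgt e0) (fun x => dvec src' tgt' x.1) := by
            funext o
            cases o <;> rfl
          have hstep1 := linearIndependent_equiv' (R := ℚ) (eqv2 e0 B) hfam
          rw [← hstep1]
          have hd0 : dvec src tgt e0 ≠ 0 := dvec_ne_zero hne
          have hker : LinearMap.ker (pq u w) = Submodule.span ℚ {dvec src tgt e0} :=
            ker_pq u w
          have hoi := indep_option_iff (pq u w) (dvec src tgt e0) hd0 hker
            (fun x : {x : {e : E // e ≠ e0} // x ∈ B} => dvec src' tgt' x.1)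
          rw [hoi]
          have hfam2 : (fun x : {x : {e : E // e ≠ e0} // x ∈ B} =>
              pq u w (dvec src' tgt' x.1))
              = fun x : {x : {e : E // e ≠ e0} // x ∈ B} => dvec srcc tgtc x.1 := by
            funext x
            rw [dvec, map_sub, pq_chi, pq_chi]
            rfl
          rw [hfam2]
        omega
      rw [hXcard, hbijc, hsplitind, hihdel, hihctr]

lemma nat_card_range {α β : Type*} [Fintype α] [DecidableEq β] (f : α → β) :
    Nat.card (Set.range f) = (Finset.univ.image f).card := by
  have h : Set.range f = ↑(Finset.univ.image f) := by
    ext y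
    simp
  rw [h, Nat.card_coe_set_eq, Set.ncard_coe_finset]

end AuxDS


/-- For a bipartite multigraph `G`, the number of distinct degree sequences of
spanning subgraphs of `G` equals `T_G(2,1)`. -/
theorem stmt_14 [Fintype V] [Fintype E] [DecidableEq V] [DecidableEq E]
    (src tgt : E → V) (L : Finset V)
    (hbip : ∀ e, (src e ∈ L ∧ tgt e ∉ L) ∨ (src e ∉ L ∧ tgt e ∈ L)) :
    (Nat.card (Set.range fun F : Finset E => degIn src tgt F) : ℤ) =
      tutteEval (fun e => s(src e, tgt e)) 2 1 := by
  classical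
  set src' : E → V := fun e => if src e ∈ L then src e else tgt e with hsrc'
  set tgt' : E → V := fun e => if src e ∈ L then tgt e else src e with htgt'
  set Φ : (V → ℕ) → (V → ℤ) := fun g v => if v ∈ L then (g v : ℤ) else -(g v : ℤ) with hΦ
  have hΦinj : Function.Injective Φ := by
    intro g g' hgg
    funext v
    have := congrFun hgg v
    by_cases hv : v ∈ L
    · simp only [hΦ, if_pos hv] at this
      exact_mod_cast this
    · simp only [hΦ, if_neg hv, neg_inj] at this
      exact_mod_cast this
  have hB1 : ∀ F : Finset E, Φ (degIn src tgt F) = AuxDS.netSum src' tgt' F := by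
    intro F
    funext v
    by_cases hv : v ∈ L
    · have h1 : F.filter (fun e => src' e = v) =
          F.filter (fun e => src e = v) ∪ F.filter (fun e => tgt e = v) := by
        rw [← Finset.filter_or]
        apply Finset.filter_congr
        intro e _
        simp only [hsrc']
        constructor
        · intro h
          by_cases hL : src e ∈ L
          · rw [if_pos hL] at h; exact Or.inl h
          · rw [if_neg hL] at h; exact Or.inr h
        · rintro (h | h)
          · rw [if_pos (h ▸ hv)]; exact h
          · have hsL : src e ∉ L := by
              rcases hbip e with ⟨h1, h2⟩ | ⟨h1, h2⟩
              · exact absurd (h ▸ hv) h2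
              · exact h1
            rw [if_neg hsL]; exact h
      have hdisj : Disjoint (F.filter (fun e => src e = v)) (F.filter (fun e => tgt e = v)) := by
        rw [Finset.disjoint_left]
        intro e he1 he2
        have h1 := (Finset.mem_filter.mp he1).2
        have h2 := (Finset.mem_filter.mp he2).2
        rcases hbip e with ⟨-, hh⟩ | ⟨hh, -⟩
        · exact hh (h2 ▸ hv)
        · exact hh (h1 ▸ hv)
      have h2 : F.filter (fun e => tgt' e = v) = ∅ := by
        apply Finset.filter_false_of_mem
        intro e _
        simp only [htgt']
        by_cases hL : src e ∈ L
        · rw [if_pos hL]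
          intro h
          rcases hbip e with ⟨-, hh⟩ | ⟨hh, -⟩
          · exact hh (h ▸ hv)
          · exact hh hL
        · rw [if_neg hL]
          intro h
          exact hL (h ▸ hv)
      simp only [hΦ, if_pos hv, AuxDS.netSum, degIn, h1, h2,
        Finset.card_union_of_disjoint hdisj, Finset.card_empty]
      push_cast
      ring
    · have h1 : F.filter (fun e => tgt' e = v) =
          F.filter (fun e => src e = v) ∪ F.filter (fun e => tgt e = v) := by
        rw [← Finset.filter_or]
        apply Finset.filter_congr
        intro e _
        simp only [htgt']
        constructor
        · intro h
          by_cases hL : src e ∈ L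
          · rw [if_pos hL] at h; exact Or.inr h
          · rw [if_neg hL] at h; exact Or.inl h
        · rintro (h | h)
          · have hsL : src e ∉ L := fun hh => hv (h ▸ hh)
            rw [if_neg hsL]; exact h
          · have hsL : src e ∈ L := by
              rcases hbip e with ⟨h1, -⟩ | ⟨-, h2⟩
              · exact h1
              · exact absurd h2 (fun hh => hv (h ▸ hh))
            rw [if_pos hsL]; exact h
      have hdisj : Disjoint (F.filter (fun e => src e = v)) (F.filter (fun e => tgt e = v)) := by
        rw [Finset.disjoint_left]
        intro e he1 he2
        have h1 := (Finset.mem_filter.mp he1).2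
        have h2 := (Finset.mem_filter.mp he2).2
        rcases hbip e with ⟨hh, -⟩ | ⟨-, hh⟩
        · exact hv (h1 ▸ hh)
        · exact hv (h2 ▸ hh)
      have h2 : F.filter (fun e => src' e = v) = ∅ := by
        apply Finset.filter_false_of_mem
        intro e _
        simp only [hsrc']
        by_cases hL : src e ∈ L
        · rw [if_pos hL]
          intro h
          exact hv (h ▸ hL)
        · rw [if_neg hL]
          intro h
          rcases hbip e with ⟨hh, -⟩ | ⟨-, hh⟩
          · exact hL hh
          · exact hv (h ▸ hh)
      simp only [hΦ, if_neg hv, AuxDS.netSum, degIn, h1, h2,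
        Finset.card_union_of_disjoint hdisj, Finset.card_empty]
      push_cast
      ring
  have hLHS : Nat.card (Set.range fun F : Finset E => degIn src tgt F)
      = ((Finset.univ : Finset (Finset E)).image (AuxDS.netSum src' tgt')).card := by
    rw [AuxDS.nat_card_range]
    have himg : (Finset.univ : Finset (Finset E)).image (AuxDS.netSum src' tgt')
        = ((Finset.univ : Finset (Finset E)).image (degIn src tgt)).image Φ := by
      rw [Finset.image_image]
      apply Finset.image_congr
      intro F _
      exact (hB1 F).symm
    rw [himg, Finset.card_image_of_injective _ hΦinj]
  have hsign : AuxDS.countIndep (AuxDS.dvec src' tgt')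
      = AuxDS.countIndep (AuxDS.dvec src tgt) := by
    unfold AuxDS.countIndep
    congr 1
    apply Finset.filter_congr
    intro A _
    set ε : {x : E // x ∈ A} → ℚˣ := fun x => if src x.1 ∈ L then 1 else -1 with hε
    have hfam : (fun x : {x : E // x ∈ A} => AuxDS.dvec src' tgt' x.1)
        = ε • (fun x : {x : E // x ∈ A} => AuxDS.dvec src tgt x.1) := by
      funext x
      simp only [Pi.smul_apply', hε]
      by_cases hL : src x.1 ∈ L
      · simp only [if_pos hL, one_smul]
        rw [AuxDS.dvec, AuxDS.dvec]
        simp only [hsrc', htgt', if_pos hL]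
      · simp only [if_neg hL]
        rw [AuxDS.dvec, AuxDS.dvec]
        simp only [hsrc', htgt', if_neg hL]
        rw [Units.smul_def]
        simp only [Units.val_neg, Units.val_one, neg_smul, one_smul]
        abel
    constructor
    · intro h
      have h2 := h.units_smul ε⁻¹
      have heq : (ε⁻¹ • fun x : {x : E // x ∈ A} => AuxDS.dvec src' tgt' x.1)
          = fun x : {x : E // x ∈ A} => AuxDS.dvec src tgt x.1 := by
        rw [hfam]
        funext x
        simp only [Pi.smul_apply', Pi.inv_apply]
        exact inv_smul_smul (ε x) _
      rwa [heq] at h2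
    · intro h
      rw [hfam]
      exact h.units_smul ε
  rw [AuxDS.tutte_eq_countIndep src tgt, hLHS,
    AuxDS.master (Fintype.card E) src' tgt' rfl, hsign]
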